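/- Let 𝒳 be a measurable space, let K ≥ 1, let 𝒳₁, …, 𝒳_K be pairwise disjoint measurable subsets of 𝒳, and let F₁, …, F_K be probability measures on 𝒳 with F_k(𝒳_k) = 1 for each k. Let ω⁺₁, …, ω⁺_K and ω⁻₁, …, ω⁻_K be nonnegative weights, each collection summing to 1, satisfying ω⁺_k·ω⁻_l ≥ ω⁺_l·ω⁻_k whenever 1 ≤ k ≤ l ≤ K. Set G = Σ_{k=1}^K ω⁺_k F_k and H = Σ_{k=1}^K ω⁻_k F_k, and define s*(x) = Σ_{k=1}^K (K−k+1)·𝟙{x ∈ 𝒳_k}. For a measurable scoring function s : 𝒳 → ℝ, with X⁻ ∼ H and X⁺ ∼ G independent, define AUC(s) = ℙ(s(X⁻) < s(X⁺)) + (1/2)·ℙ(s(X⁻) = s(X⁺)). Then for every measurable s : 𝒳 → ℝ, AUC(s) ≤ AUC(s*). -/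

import Mathlib

open MeasureTheory

/-- The AUC criterion: for class-conditional distributions `Hm` (negative class) and
`Gm` (positive class), and a scoring function `s`,
`AUC(s) = ℙ(s(X⁻) < s(X⁺)) + (1/2)·ℙ(s(X⁻) = s(X⁺))` where `X⁻ ∼ Hm`, `X⁺ ∼ Gm`
are independent. -/
noncomputable def AUC {𝒳 : Type*} [MeasurableSpace 𝒳] (Hm Gm : Measure 𝒳)
    (s : 𝒳 → ℝ) : ℝ :=
  ((Hm.prod Gm) {q : 𝒳 × 𝒳 | s q.1 < s q.2}).toReal
    + (1 / 2) * ((Hm.prod Gm) {q : 𝒳 × 𝒳 | s q.1 = s q.2}).toReal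

/-- Product of finite mixtures applied to a measurable set decomposes as a double sum. -/
lemma prod_mix_apply {𝒳 : Type*} [MeasurableSpace 𝒳] {K : ℕ}
    (F : Fin K → Measure 𝒳) [hFp : ∀ k, IsProbabilityMeasure (F k)]
    (wm wp : Fin K → NNReal) {S : Set (𝒳 × 𝒳)} (hS : MeasurableSet S) :
    ((∑ k, (wm k : ENNReal) • F k).prod (∑ l, (wp l : ENNReal) • F l)) S
      = ∑ k, ∑ l, (wm k : ENNReal) * (wp l : ENNReal) * ((F k).prod (F l)) S := by
  have hsf : SFinite (∑ l, (wp l : ENNReal) • F l) :=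
    (Measure.sum_fintype (fun l => (wp l : ENNReal) • F l)) ▸
      (inferInstance : SFinite (Measure.sum fun l => (wp l : ENNReal) • F l))
  have hmeas : ∀ l : Fin K, Measurable fun x => F l (Prod.mk x ⁻¹' S) :=
    fun l => measurable_measure_prodMk_left hS
  rw [Measure.prod_apply hS]
  have inner : ∀ x, (∑ l, (wp l : ENNReal) • F l) (Prod.mk x ⁻¹' S)
      = ∑ l, (wp l : ENNReal) * F l (Prod.mk x ⁻¹' S) := by
    intro x
    rw [Measure.finset_sum_apply]
    simp [Measure.smul_apply]
  calc ∫⁻ x, (∑ l, (wp l : ENNReal) • F l) (Prod.mk x ⁻¹' S) ∂(∑ k, (wm k : ENNReal) • F k)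
      = ∑ k, (wm k : ENNReal) * ∫⁻ x, ∑ l, (wp l : ENNReal) * F l (Prod.mk x ⁻¹' S) ∂(F k) := by
        simp_rw [inner]
        rw [lintegral_finset_sum_measure]
        simp_rw [lintegral_smul_measure, smul_eq_mul]
    _ = ∑ k, ∑ l, (wm k : ENNReal) * (wp l : ENNReal) * ((F k).prod (F l)) S := by
        refine Finset.sum_congr rfl fun k _ => ?_
        rw [lintegral_finset_sum _ (fun l _ => (hmeas l).const_mul _), Finset.mul_sum]
        refine Finset.sum_congr rfl fun l _ => ?_
        rw [lintegral_const_mul _ (hmeas l), Measure.prod_apply hS, mul_assoc]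

/-- Antisymmetry of the pairwise AUC contribution:
`A(μ,ν) + A(ν,μ) = 1` for probability measures. -/
lemma auc_pair_antisym {𝒳 : Type*} [MeasurableSpace 𝒳] (μ ν : Measure 𝒳)
    [IsProbabilityMeasure μ] [IsProbabilityMeasure ν] (t : 𝒳 → ℝ) (ht : Measurable t) :
    (((μ.prod ν) {q : 𝒳 × 𝒳 | t q.1 < t q.2}).toReal
        + (1 / 2) * ((μ.prod ν) {q : 𝒳 × 𝒳 | t q.1 = t q.2}).toReal)
      + (((ν.prod μ) {q : 𝒳 × 𝒳 | t q.1 < t q.2}).toReal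
        + (1 / 2) * ((ν.prod μ) {q : 𝒳 × 𝒳 | t q.1 = t q.2}).toReal) = 1 := by
  have hmf : Measurable fun q : 𝒳 × 𝒳 => t q.1 := ht.comp measurable_fst
  have hmg : Measurable fun q : 𝒳 × 𝒳 => t q.2 := ht.comp measurable_snd
  have hlt : MeasurableSet {q : 𝒳 × 𝒳 | t q.1 < t q.2} := measurableSet_lt hmf hmg
  have hgt : MeasurableSet {q : 𝒳 × 𝒳 | t q.2 < t q.1} := measurableSet_lt hmg hmf
  have heq : MeasurableSet {q : 𝒳 × 𝒳 | t q.1 = t q.2} :=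
    measurableSet_eq_fun hmf hmg
  -- rewrite the ν.prod μ measures via swap
  have hswap_lt : (ν.prod μ) {q : 𝒳 × 𝒳 | t q.1 < t q.2}
      = (μ.prod ν) {q : 𝒳 × 𝒳 | t q.2 < t q.1} := by
    rw [← Measure.prod_swap, Measure.map_apply measurable_swap hlt]
    rfl
  have hswap_eq : (ν.prod μ) {q : 𝒳 × 𝒳 | t q.1 = t q.2}
      = (μ.prod ν) {q : 𝒳 × 𝒳 | t q.1 = t q.2} := by
    rw [← Measure.prod_swap, Measure.map_apply measurable_swap heq]
    have : Prod.swap ⁻¹' {q : 𝒳 × 𝒳 | t q.1 = t q.2} = {q : 𝒳 × 𝒳 | t q.1 = t q.2} := by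
      ext q; simp [eq_comm]
    rw [this]
  rw [hswap_lt, hswap_eq]
  -- partition of the whole space
  have hpart : (μ.prod ν) {q : 𝒳 × 𝒳 | t q.1 < t q.2}
      + (μ.prod ν) {q : 𝒳 × 𝒳 | t q.2 < t q.1}
      + (μ.prod ν) {q : 𝒳 × 𝒳 | t q.1 = t q.2} = 1 := by
    have hd1 : Disjoint {q : 𝒳 × 𝒳 | t q.1 < t q.2} {q : 𝒳 × 𝒳 | t q.2 < t q.1} := by
      rw [Set.disjoint_left]; intro q h1 h2
      simp only [Set.mem_setOf_eq] at h1 h2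
      exact lt_asymm h1 h2
    have hd2 : Disjoint ({q : 𝒳 × 𝒳 | t q.1 < t q.2} ∪ {q : 𝒳 × 𝒳 | t q.2 < t q.1})
        {q : 𝒳 × 𝒳 | t q.1 = t q.2} := by
      rw [Set.disjoint_left]; intro q h1 h2
      simp only [Set.mem_union, Set.mem_setOf_eq] at h1 h2
      rcases h1 with h1 | h1
      · exact absurd h2 (ne_of_lt h1)
      · exact absurd h2.symm (ne_of_lt h1)
    have huniv : ({q : 𝒳 × 𝒳 | t q.1 < t q.2} ∪ {q : 𝒳 × 𝒳 | t q.2 < t q.1})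
        ∪ {q : 𝒳 × 𝒳 | t q.1 = t q.2} = Set.univ := by
      ext q; simp only [Set.mem_union, Set.mem_setOf_eq, Set.mem_univ, iff_true]
      rcases lt_trichotomy (t q.1) (t q.2) with h | h | h
      · exact Or.inl (Or.inl h)
      · exact Or.inr h
      · exact Or.inl (Or.inr h)
    have := measure_union hd2 heq (μ := μ.prod ν)
    rw [huniv, measure_union hd1 hgt] at this
    rw [← this, measure_univ]
  have f1 : (μ.prod ν) {q : 𝒳 × 𝒳 | t q.1 < t q.2} ≠ ⊤ := measure_ne_top _ _
  have f2 : (μ.prod ν) {q : 𝒳 × 𝒳 | t q.2 < t q.1} ≠ ⊤ := measure_ne_top _ _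
  have f3 : (μ.prod ν) {q : 𝒳 × 𝒳 | t q.1 = t q.2} ≠ ⊤ := measure_ne_top _ _
  have := congrArg ENNReal.toReal hpart
  rw [ENNReal.toReal_add (ENNReal.add_ne_top.mpr ⟨f1, f2⟩) f3, ENNReal.toReal_add f1 f2,
    ENNReal.toReal_one] at this
  linarith

/-- Mixtures with disjoint supports: let `𝒳₁, …, 𝒳_K` be pairwise
disjoint measurable sets (indexed by `Fin K`, `K ≥ 1`), `F_k` probability measures with
`F_k(𝒳_k) = 1`, and nonnegative weights `ω⁺, ω⁻` each summing to `1` with nonincreasing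
likelihood ratios (`ω⁺_k·ω⁻_l ≥ ω⁺_l·ω⁻_k` for `k ≤ l`).  With
`G = ∑ ω⁺_k F_k`, `H = ∑ ω⁻_k F_k` and the piecewise-constant scoring function
`s*(x) = ∑_k (K - k)·𝟙{x ∈ 𝒳_k}` (`0`-based indexing of `Fin K`, i.e. `K - k + 1` in
`1`-based indexing), every measurable scoring function `s` satisfies
`AUC(s) ≤ AUC(s*)`. -/
theorem stmt_12 {𝒳 : Type*} [MeasurableSpace 𝒳] (K : ℕ) (hK : 1 ≤ K)
    (Xs : Fin K → Set 𝒳) (hXmeas : ∀ k, MeasurableSet (Xs k))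
    (hdisj : Pairwise (Function.onFun Disjoint Xs))
    (F : Fin K → Measure 𝒳) (hFprob : ∀ k, IsProbabilityMeasure (F k))
    (hFsupp : ∀ k, F k (Xs k) = 1)
    (wp wm : Fin K → NNReal)
    (hwp : ∑ k, wp k = 1) (hwm : ∑ k, wm k = 1)
    (hratio : ∀ k l : Fin K, k ≤ l → wp l * wm k ≤ wp k * wm l)
    (G Hm : Measure 𝒳)
    (hG : G = ∑ k, (wp k : ENNReal) • F k)
    (hH : Hm = ∑ k, (wm k : ENNReal) • F k)
    (sstar : 𝒳 → ℝ)
    (hsstar : ∀ x, sstar x = ∑ k : Fin K, Set.indicator (Xs k)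
      (fun _ => ((K : ℝ) - (k : ℕ))) x)
    (s : 𝒳 → ℝ) (hs : Measurable s) :
    AUC Hm G s ≤ AUC Hm G sstar := by
  haveI : ∀ k, IsProbabilityMeasure (F k) := hFprob
  -- measurability of sstar
  have hmstar : Measurable sstar := by
    have hfe : sstar = fun x => ∑ k : Fin K,
        Set.indicator (Xs k) (fun _ => ((K : ℝ) - (k : ℕ))) x := funext hsstar
    rw [hfe]
    exact Finset.measurable_sum _ fun k _ => measurable_const.indicator (hXmeas k)
  -- value of sstar on each component
  have hval : ∀ j : Fin K, ∀ x ∈ Xs j, sstar x = (K : ℝ) - (j : ℕ) := by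
    intro j x hx
    rw [hsstar, Finset.sum_eq_single j]
    · exact Set.indicator_of_mem hx _
    · intro i _ hij
      exact Set.indicator_of_notMem
        (fun hxi => Set.disjoint_left.mp (hdisj hij) hxi hx) _
    · intro h; exact absurd (Finset.mem_univ j) h
  -- pairwise AUC contributions
  set a : (𝒳 → ℝ) → Fin K → Fin K → ℝ := fun t k l =>
    (((F k).prod (F l)) {q : 𝒳 × 𝒳 | t q.1 < t q.2}).toReal
      + (1 / 2) * (((F k).prod (F l)) {q : 𝒳 × 𝒳 | t q.1 = t q.2}).toReal with ha
  set c : Fin K → Fin K → ℝ := fun k l => (wm k : ℝ) * (wp l : ℝ) with hcdef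
  clear_value a c
  -- AUC expansion
  have hAUC : ∀ t : 𝒳 → ℝ, Measurable t →
      AUC Hm G t = ∑ k, ∑ l, c k l * a t k l := by
    intro t ht
    have hmf : Measurable fun q : 𝒳 × 𝒳 => t q.1 := ht.comp measurable_fst
    have hmg : Measurable fun q : 𝒳 × 𝒳 => t q.2 := ht.comp measurable_snd
    have hlt : MeasurableSet {q : 𝒳 × 𝒳 | t q.1 < t q.2} := measurableSet_lt hmf hmg
    have heq : MeasurableSet {q : 𝒳 × 𝒳 | t q.1 = t q.2} :=
      measurableSet_eq_fun hmf hmg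
    have hfin : ∀ (S : Set (𝒳 × 𝒳)) (k l : Fin K),
        (wm k : ENNReal) * (wp l : ENNReal) * ((F k).prod (F l)) S ≠ ⊤ :=
      fun S k l => ENNReal.mul_ne_top
        (ENNReal.mul_ne_top ENNReal.coe_ne_top ENNReal.coe_ne_top) (measure_ne_top _ _)
    have hexp : ∀ (S : Set (𝒳 × 𝒳)), MeasurableSet S →
        ((Hm.prod G) S).toReal = ∑ k, ∑ l, c k l * (((F k).prod (F l)) S).toReal := by
      intro S hS
      rw [hH, hG, prod_mix_apply F wm wp hS,
        ENNReal.toReal_sum (fun k _ => by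
          exact ENNReal.sum_ne_top.mpr fun l _ => hfin S k l)]
      refine Finset.sum_congr rfl fun k _ => ?_
      rw [ENNReal.toReal_sum (fun l _ => hfin S k l)]
      refine Finset.sum_congr rfl fun l _ => ?_
      rw [ENNReal.toReal_mul, ENNReal.toReal_mul, ENNReal.coe_toReal, ENNReal.coe_toReal, hcdef]
    rw [AUC, hexp _ hlt, hexp _ heq, Finset.mul_sum]
    rw [← Finset.sum_add_distrib]
    refine Finset.sum_congr rfl fun k _ => ?_
    rw [Finset.mul_sum, ← Finset.sum_add_distrib]
    refine Finset.sum_congr rfl fun l _ => ?_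
    simp only [ha]
    ring
  -- antisymmetry
  have hsym : ∀ (t : 𝒳 → ℝ), Measurable t → ∀ k l : Fin K, a t k l + a t l k = 1 := by
    intro t ht k l
    simp only [ha]
    exact auc_pair_antisym (F k) (F l) t ht
  -- nonnegativity
  have hnn : ∀ (t : 𝒳 → ℝ) (k l : Fin K), 0 ≤ a t k l := by
    intro t k l
    have h1 : (0:ℝ) ≤ (((F k).prod (F l)) {q : 𝒳 × 𝒳 | t q.1 < t q.2}).toReal :=
      ENNReal.toReal_nonneg
    have h2 : (0:ℝ) ≤ (((F k).prod (F l)) {q : 𝒳 × 𝒳 | t q.1 = t q.2}).toReal :=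
      ENNReal.toReal_nonneg
    simp only [ha]
    linarith
  -- a sstar k l = 0 for k < l
  have hzero : ∀ k l : Fin K, k < l → a sstar k l = 0 := by
    intro k l hkl
    have hrect : ((F k).prod (F l)) (Xs k ×ˢ Xs l) = 1 := by
      rw [Measure.prod_prod, hFsupp, hFsupp, mul_one]
    have hcompl : ((F k).prod (F l)) ((Xs k ×ˢ Xs l)ᶜ) = 0 := by
      have := measure_compl ((hXmeas k).prod (hXmeas l)) (measure_ne_top ((F k).prod (F l)) _)
      rw [hrect, measure_univ, tsub_self] at this
      exact this
    have hscore : ∀ q : 𝒳 × 𝒳, q ∈ Xs k ×ˢ Xs l → sstar q.2 < sstar q.1 := by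
      intro q hq
      rw [hval k q.1 hq.1, hval l q.2 hq.2]
      have : (k : ℕ) < (l : ℕ) := hkl
      have : ((k : ℕ) : ℝ) < ((l : ℕ) : ℝ) := by exact_mod_cast this
      linarith
    have hz1 : ((F k).prod (F l)) {q : 𝒳 × 𝒳 | sstar q.1 < sstar q.2} = 0 := by
      refine measure_mono_null ?_ hcompl
      intro q hq
      simp only [Set.mem_compl_iff]
      intro hmem
      exact absurd hq.out (lt_asymm (hscore q hmem))
    have hz2 : ((F k).prod (F l)) {q : 𝒳 × 𝒳 | sstar q.1 = sstar q.2} = 0 := by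
      refine measure_mono_null ?_ hcompl
      intro q hq
      simp only [Set.mem_compl_iff]
      intro hmem
      exact absurd hq.out.symm (ne_of_lt (hscore q hmem))
    simp only [ha, hz1, hz2, ENNReal.toReal_zero, mul_zero, add_zero]
  -- coefficient inequality
  have hc : ∀ k l : Fin K, k ≤ l → c k l ≤ c l k := by
    intro k l hkl
    have := hratio k l hkl
    have h' : ((wp l * wm k : NNReal) : ℝ) ≤ ((wp k * wm l : NNReal) : ℝ) := by
      exact_mod_cast this
    push_cast at h'
    simp only [hcdef]
    linarith
  have hcnn : ∀ k l : Fin K, 0 ≤ c k l := by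
    intro k l
    simp only [hcdef]
    exact mul_nonneg (wm k).coe_nonneg (wp l).coe_nonneg
  -- the key pairwise inequality
  have hmain : ∀ k l : Fin K, k < l →
      c k l * a s k l + c l k * a s l k ≤ c k l * a sstar k l + c l k * a sstar l k := by
    intro k l hkl
    have h1 := hc k l hkl.le
    have h2 := hsym s hs k l
    have h3 := hsym sstar hmstar k l
    have h4 := hzero k l hkl
    have h5 := hnn s k l
    have hA2 : a s l k = 1 - a s k l := by linarith
    have hA3 : a sstar l k = 1 := by linarith
    rw [h4, hA2, hA3]
    nlinarith [mul_le_mul_of_nonneg_right h1 h5]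
  have key : ∀ k l : Fin K,
      c k l * a s k l + c l k * a s l k ≤ c k l * a sstar k l + c l k * a sstar l k := by
    intro k l
    rcases lt_trichotomy k l with h | h | h
    · exact hmain k l h
    · subst h
      have h2 := hsym s hs k k
      have h3 := hsym sstar hmstar k k
      have e1 : a s k k = 1/2 := by linarith
      have e2 : a sstar k k = 1/2 := by linarith
      rw [e1, e2]
    · have := hmain l k h
      linarith
  -- summation
  rw [hAUC s hs, hAUC sstar hmstar]
  have hcomm : ∀ t : 𝒳 → ℝ,
      (∑ k, ∑ l, c l k * a t l k) = ∑ k, ∑ l, c k l * a t k l := fun t =>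
    Finset.sum_comm
  have hle : ∑ k, ∑ l, (c k l * a s k l + c l k * a s l k)
      ≤ ∑ k, ∑ l, (c k l * a sstar k l + c l k * a sstar l k) :=
    Finset.sum_le_sum fun k _ => Finset.sum_le_sum fun l _ => key k l
  have hsplit : ∀ t : 𝒳 → ℝ,
      (∑ k, ∑ l, (c k l * a t k l + c l k * a t l k))
        = 2 * ∑ k, ∑ l, c k l * a t k l := by
    intro t
    have : (∑ k, ∑ l, (c k l * a t k l + c l k * a t l k))
        = (∑ k, ∑ l, c k l * a t k l) + ∑ k, ∑ l, c l k * a t l k := by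
      simp [Finset.sum_add_distrib]
    rw [this, hcomm]
    ring
  rw [hsplit s, hsplit sstar] at hle
  linarith
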